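/- Let q = p^m with p prime and m ≥ 2, let ξ be a primitive element of F_q, and let k, l ≥ 1 with k + l = m. Define A to be the set of F_p-linear combinations of 1, ξ, ..., ξ^{k-1}, and B the set of F_p-linear combinations of 1, ξ, ..., ξ^{l-1}. Then |A||B| = q and the product set AB is contained in the F_p-span of 1, ξ, ..., ξ^{m-2}, which is a proper additive subgroup of F_q; hence NAB ≠ F_q for every N ≥ 1. -/

import Mathlib

open Pointwise

theorem stmt_19 {F : Type*} [Field F] [Fintype F]
    (p m k l : ℕ) [Fact p.Prime] [CharP F p]
    (hq : Fintype.card F = p ^ m) (hm : 2 ≤ m)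
    (hk : 1 ≤ k) (hl : 1 ≤ l) (hkl : k + l = m)
    (ξ : F) (hξ : ∀ y : F, y ≠ 0 → ∃ n : ℕ, ξ ^ n = y)
    (A : Set F) (hA : A = {x : F | ∃ c : Fin k → ZMod p,
      x = ∑ i, (ZMod.castHom (dvd_refl p) F (c i)) * ξ ^ (i : ℕ)})
    (B : Set F) (hB : B = {x : F | ∃ c : Fin l → ZMod p,
      x = ∑ i, (ZMod.castHom (dvd_refl p) F (c i)) * ξ ^ (i : ℕ)})
    (C : Set F) (hC : C = {x : F | ∃ c : Fin (m - 1) → ZMod p,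
      x = ∑ i, (ZMod.castHom (dvd_refl p) F (c i)) * ξ ^ (i : ℕ)}) :
    A.ncard * B.ncard = p ^ m ∧ A * B ⊆ C ∧ C ≠ Set.univ ∧
      ∀ N : ℕ, 1 ≤ N →
        {x : F | ∃ a : Fin N → F, ∃ b : Fin N → F,
          (∀ i, a i ∈ A ∧ b i ∈ B) ∧ x = ∑ i, a i * b i} ≠ Set.univ := by
  subst hA hB hC
  letI : Algebra (ZMod p) F := ZMod.algebra F p
  have hp : p.Prime := Fact.out
  have hcast : ∀ (a : ZMod p) (x : F), (ZMod.castHom (dvd_refl p) F a) * x = a • x :=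
    fun _ _ => rfl
  simp only [hcast]
  -- power basis setup
  have hmem : ξ ∈ Algebra.adjoin (ZMod p) ({ξ} : Set F) :=
    Algebra.subset_adjoin (Set.mem_singleton ξ)
  have hadj : Algebra.adjoin (ZMod p) ({ξ} : Set F) = ⊤ := by
    rw [eq_top_iff]
    intro y _
    by_cases hy : y = 0
    · rw [hy]; exact zero_mem _
    · obtain ⟨n, rfl⟩ := hξ y hy
      exact Subalgebra.pow_mem _ hmem n
  have hint : IsIntegral (ZMod p) ξ := .of_finite _ _
  let pb : PowerBasis (ZMod p) F := (Algebra.adjoin.powerBasis hint).map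
    ((Subalgebra.equivOfEq _ _ hadj).trans Subalgebra.topEquiv)
  have hgen : pb.gen = ξ := rfl
  have hdim : pb.dim = m := by
    have h1 := Module.card_eq_pow_finrank (K := ZMod p) (V := F)
    rw [ZMod.card, hq, pb.finrank] at h1
    exact (Nat.pow_right_injective hp.two_le h1).symm
  let b : Module.Basis (Fin m) (ZMod p) F := pb.basis.reindex (finCongr hdim)
  have hb : ∀ i : Fin m, b i = ξ ^ (i : ℕ) := by
    intro i
    rw [Module.Basis.reindex_apply, pb.basis_eq_pow, hgen]
    rfl
  have hfinj : Function.Injective (fun c : Fin m → ZMod p => ∑ i, c i • ξ ^ (i : ℕ)) := by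
    have he : (fun c : Fin m → ZMod p => ∑ i, c i • ξ ^ (i : ℕ)) = ⇑b.equivFun.symm := by
      funext c
      rw [Module.Basis.equivFun_symm_apply]
      exact Finset.sum_congr rfl fun i _ => by rw [hb]
    rw [he]
    exact b.equivFun.symm.injective
  -- extension lemma
  have hext : ∀ (n : ℕ), n ≤ m → ∀ (d : Fin n → ZMod p),
      ∑ j : Fin m, (if h : (j : ℕ) < n then d ⟨j, h⟩ else 0) • ξ ^ (j : ℕ)
        = ∑ i : Fin n, d i • ξ ^ (i : ℕ) := by
    intro n hn d
    set f : ℕ → F := fun j => (if h : j < n then d ⟨j, h⟩ else 0) • ξ ^ j with hf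
    have h1 : ∑ j : Fin m, (if h : (j : ℕ) < n then d ⟨j, h⟩ else 0) • ξ ^ (j : ℕ)
        = ∑ j ∈ Finset.range m, f j := Fin.sum_univ_eq_sum_range f m
    have h2 : ∑ i : Fin n, d i • ξ ^ (i : ℕ) = ∑ j ∈ Finset.range n, f j := by
      rw [← Fin.sum_univ_eq_sum_range f n]
      exact Finset.sum_congr rfl fun i _ => by simp [hf, i.isLt]
    rw [h1, h2]
    refine (Finset.sum_subset (Finset.range_subset_range.mpr hn) ?_).symm
    intro x _ hx
    rw [Finset.mem_range, not_lt] at hx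
    simp [hf, Nat.not_lt.mpr hx]
  -- injectivity for lower dimensions
  have hinj : ∀ (n : ℕ), n ≤ m → Function.Injective
      (fun c : Fin n → ZMod p => ∑ i, c i • ξ ^ (i : ℕ)) := by
    intro n hn c c' h
    have h3 : (fun j : Fin m => if h : (j : ℕ) < n then c ⟨j, h⟩ else 0)
        = (fun j : Fin m => if h : (j : ℕ) < n then c' ⟨j, h⟩ else 0) := by
      apply hfinj
      simp only
      rw [hext n hn c, hext n hn c']
      exact h
    funext i
    have h4 := congrFun h3 ⟨i, lt_of_lt_of_le i.isLt hn⟩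
    simpa [i.isLt] using h4
  -- ncard of parametrized sets
  have hncard : ∀ (n : ℕ), n ≤ m →
      ({x : F | ∃ c : Fin n → ZMod p, x = ∑ i, c i • ξ ^ (i : ℕ)}).ncard = p ^ n := by
    intro n hn
    have hr : {x : F | ∃ c : Fin n → ZMod p, x = ∑ i, c i • ξ ^ (i : ℕ)}
        = Set.range (fun c : Fin n → ZMod p => ∑ i, c i • ξ ^ (i : ℕ)) :=
      Set.ext fun x => ⟨fun ⟨c, hc⟩ => ⟨c, hc.symm⟩, fun ⟨c, hc⟩ => ⟨c, hc.symm⟩⟩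
    rw [hr, ← Set.image_univ, Set.ncard_image_of_injective _ (hinj n hn), Set.ncard_univ]
    simp [Nat.card_eq_fintype_card, ZMod.card]
  -- C-set properties
  set Cs : Set F := {x : F | ∃ c : Fin (m - 1) → ZMod p, x = ∑ i, c i • ξ ^ (i : ℕ)} with hCs
  have hC0 : (0 : F) ∈ Cs := ⟨0, by simp⟩
  have hCadd : ∀ x y : F, x ∈ Cs → y ∈ Cs → x + y ∈ Cs := by
    rintro x y ⟨c, rfl⟩ ⟨d, rfl⟩
    refine ⟨c + d, ?_⟩
    rw [← Finset.sum_add_distrib]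
    exact Finset.sum_congr rfl fun i _ => by rw [Pi.add_apply, add_smul]
  have hCsmul : ∀ (r : ZMod p) (x : F), x ∈ Cs → r • x ∈ Cs := by
    rintro r x ⟨c, rfl⟩
    refine ⟨r • c, ?_⟩
    rw [Finset.smul_sum]
    exact Finset.sum_congr rfl fun i _ => by rw [Pi.smul_apply, smul_eq_mul, ← smul_smul]
  have hCpow : ∀ t : ℕ, t ≤ m - 2 → ξ ^ t ∈ Cs := by
    intro t ht
    show ∃ c : Fin (m - 1) → ZMod p, ξ ^ t = ∑ i, c i • ξ ^ (i : ℕ)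
    refine ⟨(Pi.single (⟨t, by omega⟩ : Fin (m - 1)) (1 : ZMod p) : Fin (m - 1) → ZMod p), ?_⟩
    rw [Finset.sum_eq_single (⟨t, by omega⟩ : Fin (m - 1))
      (fun c _ hc => by rw [Pi.single_eq_of_ne hc, zero_smul])
      (fun h => absurd (Finset.mem_univ _) h)]
    rw [Pi.single_eq_same, one_smul]
  have hCsum : ∀ (N : ℕ) (g : Fin N → F), (∀ i, g i ∈ Cs) → ∑ i, g i ∈ Cs := by
    intro N g hg
    exact Finset.sum_induction g (· ∈ Cs) hCadd hC0 (fun i _ => hg i)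
  have hCne : ξ ^ (m - 1) ∉ Cs := by
    rintro ⟨c, hc⟩
    have h1 := hext (m - 1) (by omega) c
    have h2 : ∑ i : Fin m, (Pi.single (⟨m - 1, by omega⟩ : Fin m) (1 : ZMod p) : Fin m → ZMod p) i • ξ ^ (i : ℕ)
        = ξ ^ (m - 1) := by
      rw [Finset.sum_eq_single (⟨m - 1, by omega⟩ : Fin m)
        (fun c _ hc => by rw [Pi.single_eq_of_ne hc, zero_smul])
        (fun h => absurd (Finset.mem_univ _) h)]
      rw [Pi.single_eq_same, one_smul]
    have h3 := hfinj (h2.trans (hc.trans h1.symm))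
    have h4 := congrFun h3 ⟨m - 1, by omega⟩
    rw [Pi.single_eq_same, dif_neg (lt_irrefl (m - 1))] at h4
    exact one_ne_zero h4
  -- product subset
  have hAB : {x : F | ∃ c : Fin k → ZMod p, x = ∑ i, c i • ξ ^ (i : ℕ)} *
      {x : F | ∃ c : Fin l → ZMod p, x = ∑ i, c i • ξ ^ (i : ℕ)} ⊆ Cs := by
    intro x hx
    rw [Set.mem_mul] at hx
    obtain ⟨a, ⟨c, rfl⟩, b', ⟨d, rfl⟩, rfl⟩ := hx
    rw [Finset.sum_mul_sum]
    refine Finset.sum_induction _ (· ∈ Cs) hCadd hC0 (fun i _ => ?_)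
    refine Finset.sum_induction _ (· ∈ Cs) hCadd hC0 (fun j _ => ?_)
    have he : (c i • ξ ^ (i : ℕ)) * (d j • ξ ^ (j : ℕ))
        = (c i * d j) • ξ ^ ((i : ℕ) + (j : ℕ)) := by
      rw [smul_mul_smul_comm, pow_add]
    rw [he]
    have hi := i.isLt
    have hj := j.isLt
    exact hCsmul _ _ (hCpow _ (by omega))
  refine ⟨?_, hAB, ?_, ?_⟩
  · rw [hncard k (by omega), hncard l (by omega), ← pow_add, hkl]
  · intro h
    exact hCne (h ▸ Set.mem_univ _)
  · intro N hN h
    have hx : ξ ^ (m - 1) ∈ {x : F | ∃ a : Fin N → F, ∃ b : Fin N → F,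
        (∀ i, a i ∈ {x : F | ∃ c : Fin k → ZMod p, x = ∑ i, c i • ξ ^ (i : ℕ)} ∧
          b i ∈ {x : F | ∃ c : Fin l → ZMod p, x = ∑ i, c i • ξ ^ (i : ℕ)}) ∧
        x = ∑ i, a i * b i} := h ▸ Set.mem_univ _
    obtain ⟨a, b', hab, hx⟩ := hx
    refine hCne (hx ▸ hCsum N (fun i => a i * b' i) (fun i => ?_))
    exact hAB (Set.mul_mem_mul (hab i).1 (hab i).2)
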